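/- arXiv:1607.03236 — 2 statements merged into one kernel-verified Lean document; each statement's English description precedes it below -/
import Mathlib

section
/- Let ρ be a density matrix on ℂ^d and let Λ be a measurement operator (a Hermitian matrix with 0 ≤ Λ ≤ I) such that tr(Λρ) > 0. Then the fidelity between ρ and the post-measurement state satisfies F( ρ , √Λ ρ √Λ / tr(Λρ) ) ≥ √( tr(Λρ) ). -/
open Matrix
open scoped ComplexOrder

namespace Matrix.PosSemidef

/-- The positive semidefinite square root, as defined in the older Mathlib (removed since). -/
noncomputable def sqrt {n : Type*} [Fintype n] [DecidableEq n] {𝕜 : Type*} [RCLike 𝕜]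
    {A : Matrix n n 𝕜} (hA : A.PosSemidef) : Matrix n n 𝕜 :=
  hA.1.eigenvectorUnitary.1 * diagonal ((↑) ∘ (√·) ∘ hA.1.eigenvalues) *
    (star hA.1.eigenvectorUnitary : Matrix n n 𝕜)

lemma posSemidef_sqrt {n : Type*} [Fintype n] [DecidableEq n] {𝕜 : Type*} [RCLike 𝕜]
    {A : Matrix n n 𝕜} (hA : A.PosSemidef) : PosSemidef hA.sqrt := by
  apply PosSemidef.mul_mul_conjTranspose_same
  refine posSemidef_diagonal_iff.mpr fun i ↦ ?_
  rw [Function.comp_apply, RCLike.nonneg_iff]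
  constructor
  · simp only [Function.comp_apply, RCLike.ofReal_re]
    exact Real.sqrt_nonneg _
  · simp only [Function.comp_apply, RCLike.ofReal_im]

end Matrix.PosSemidef

namespace Matrix.PosSemidef

open scoped MatrixOrder in
lemma sqrt_eq_cfcSqrt {n : Type*} [Fintype n] [DecidableEq n]
    {A : Matrix n n ℂ} (hA : A.PosSemidef) : hA.sqrt = CFC.sqrt A := by
  rw [CFC.sqrt_eq_cfc, cfc_nnreal_eq_real _ A, hA.1.cfc_eq]
  simp only [IsHermitian.cfc, Matrix.PosSemidef.sqrt, Unitary.conjStarAlgAut_apply]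
  congr 3
  ext i
  simp [max_eq_left (hA.eigenvalues_nonneg i)]

open scoped MatrixOrder in
lemma sqrt_mul_self {n : Type*} [Fintype n] [DecidableEq n]
    {A : Matrix n n ℂ} (hA : A.PosSemidef) : hA.sqrt * hA.sqrt = A := by
  rw [hA.sqrt_eq_cfcSqrt]
  exact CFC.sqrt_mul_sqrt_self A hA.nonneg

open scoped MatrixOrder in
lemma eq_sqrt_of_sq_eq {n : Type*} [Fintype n] [DecidableEq n]
    {A B : Matrix n n ℂ} (hA : A.PosSemidef) (hB : B.PosSemidef) (hAB : A ^ 2 = B) :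
    A = hB.sqrt := by
  rw [hB.sqrt_eq_cfcSqrt]
  exact (CFC.sqrt_unique (by rw [← sq]; exact hAB) hA.nonneg).symm

end Matrix.PosSemidef

lemma aux_trace_nonneg {d : ℕ} {M : Matrix (Fin d) (Fin d) ℂ} (hM : M.PosSemidef) :
    0 ≤ M.trace := by
  rw [Matrix.trace]
  refine Finset.sum_nonneg fun i _ ↦ ?_
  have := hM.dotProduct_mulVec_nonneg (Pi.single i 1)
  simpa [dotProduct, Matrix.mulVec, Pi.single_apply, Finset.sum_ite_eq] using this

lemma aux_smul_psd {d : ℕ} {M : Matrix (Fin d) (Fin d) ℂ} (hM : M.PosSemidef)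
    {s : ℝ} (hs : 0 ≤ s) : ((s : ℂ) • M).PosSemidef := by
  refine .of_dotProduct_mulVec_nonneg ?_ ?_
  · unfold Matrix.IsHermitian
    rw [conjTranspose_smul, hM.1.eq]
    congr 1
    simp
  · intro x
    have := hM.dotProduct_mulVec_nonneg x
    rw [smul_mulVec, dotProduct_smul]
    positivity

lemma aux_eig_le_one {d : ℕ} {Λ : Matrix (Fin d) (Fin d) ℂ} (hΛ : Λ.PosSemidef)
    (hΛI : ((1 : Matrix (Fin d) (Fin d) ℂ) - Λ).PosSemidef) (i : Fin d) :
    hΛ.1.eigenvalues i ≤ 1 := by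
  have h : 0 ≤ Complex.re (star (⇑(hΛ.1.eigenvectorBasis i) : Fin d → ℂ) ⬝ᵥ
        (⇑(hΛ.1.eigenvectorBasis i) : Fin d → ℂ)) -
      Complex.re (star (⇑(hΛ.1.eigenvectorBasis i) : Fin d → ℂ) ⬝ᵥ
        Λ *ᵥ (⇑(hΛ.1.eigenvectorBasis i) : Fin d → ℂ)) := by
    have h0 := hΛI.re_dotProduct_nonneg (hΛ.1.eigenvectorBasis i)
    rw [sub_mulVec, dotProduct_sub, map_sub, one_mulVec] at h0
    exact h0
  have h1 : Complex.re (star (⇑(hΛ.1.eigenvectorBasis i) : Fin d → ℂ) ⬝ᵥ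
      (⇑(hΛ.1.eigenvectorBasis i) : Fin d → ℂ)) = 1 := by
    have horm := hΛ.1.eigenvectorBasis.orthonormal.1 i
    have heq : (star (⇑(hΛ.1.eigenvectorBasis i) : Fin d → ℂ) ⬝ᵥ
        (⇑(hΛ.1.eigenvectorBasis i) : Fin d → ℂ)) =
        inner ℂ (hΛ.1.eigenvectorBasis i) (hΛ.1.eigenvectorBasis i) :=
      by rw [EuclideanSpace.inner_eq_star_dotProduct, dotProduct_comm]
    rw [heq, inner_self_eq_norm_sq_to_K]
    simp [horm]
  have h2 : hΛ.1.eigenvalues i =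
      Complex.re (star (⇑(hΛ.1.eigenvectorBasis i) : Fin d → ℂ) ⬝ᵥ
        Λ *ᵥ (⇑(hΛ.1.eigenvectorBasis i) : Fin d → ℂ)) :=
    hΛ.1.eigenvalues_eq i
  rw [h1, ← h2] at h
  linarith

lemma aux_sqrt_sub_psd {d : ℕ} {Λ : Matrix (Fin d) (Fin d) ℂ} (hΛ : Λ.PosSemidef)
    (hΛI : ((1 : Matrix (Fin d) (Fin d) ℂ) - Λ).PosSemidef) :
    (hΛ.sqrt - Λ).PosSemidef := by
  have key : hΛ.sqrt - Λ =
      hΛ.1.eigenvectorUnitary.1 *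
        diagonal ((↑) ∘ (fun x ↦ Real.sqrt x - x) ∘ hΛ.1.eigenvalues) *
        (star hΛ.1.eigenvectorUnitary : Matrix (Fin d) (Fin d) ℂ) := by
    nth_rewrite 2 [hΛ.1.spectral_theorem]
    rw [Unitary.conjStarAlgAut_apply, Matrix.PosSemidef.sqrt, ← sub_mul, ← mul_sub, diagonal_sub]
    congr 1
    ext j
    simp [Complex.ofReal_sub]
  rw [key]
  have hd : (diagonal ((↑) ∘ (fun x ↦ Real.sqrt x - x) ∘ hΛ.1.eigenvalues :
      Fin d → ℂ)).PosSemidef := by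
    refine posSemidef_diagonal_iff.mpr fun j ↦ ?_
    have h0 := hΛ.eigenvalues_nonneg j
    have h1 := aux_eig_le_one hΛ hΛI j
    have : hΛ.1.eigenvalues j ≤ Real.sqrt (hΛ.1.eigenvalues j) := by
      nth_rewrite 1 [← Real.sqrt_sq h0]
      exact Real.sqrt_le_sqrt (by nlinarith)
    simp only [Function.comp_apply]
    rw [Complex.le_def]
    constructor
    · simpa using sub_nonneg.mpr this
    · simp
  have := hd.mul_mul_conjTranspose_same (hΛ.1.eigenvectorUnitary.1)
  rwa [← Matrix.star_eq_conjTranspose] at this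

lemma aux_trace_mul_nonneg {d : ℕ} {P Q : Matrix (Fin d) (Fin d) ℂ}
    (hP : P.PosSemidef) (hQ : Q.PosSemidef) : 0 ≤ (P * Q).trace := by
  have hconj : (hP.sqrt * Q * hP.sqrt).PosSemidef := by
    have h := hQ.mul_mul_conjTranspose_same hP.sqrt
    rwa [hP.posSemidef_sqrt.1.eq] at h
  have heq : (hP.sqrt * Q * hP.sqrt).trace = (P * Q).trace := by
    rw [trace_mul_cycle, hP.sqrt_mul_self]
  rw [← heq]
  exact aux_trace_nonneg hconj

/-- The fidelity `F(ρ,σ) = tr √(√ρ σ √ρ)` between positive semidefinite matrices. -/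
noncomputable def fidelity {d : ℕ} {ρ σ : Matrix (Fin d) (Fin d) ℂ}
    (hρ : ρ.PosSemidef) (hσ : σ.PosSemidef) : ℝ :=
  ((show (hρ.sqrt * σ * hρ.sqrt).PosSemidef by
      have h := hσ.mul_mul_conjTranspose_same hρ.sqrt
      rwa [hρ.posSemidef_sqrt.1.eq] at h).sqrt.trace).re

/-- For a density matrix `ρ` and measurement operator `0 ≤ Λ ≤ I` with
`tr(Λρ) > 0`, the fidelity with the post-measurement state satisfies
`F(ρ, √Λ ρ √Λ / tr(Λρ)) ≥ √(tr(Λρ))`. -/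
theorem stmt_3 {d : ℕ} (ρ Λ : Matrix (Fin d) (Fin d) ℂ)
    (hρ : ρ.PosSemidef) (hρtr : ρ.trace = 1)
    (hΛ : Λ.PosSemidef) (hΛI : ((1 : Matrix (Fin d) (Fin d) ℂ) - Λ).PosSemidef)
    (hpos : 0 < ((Λ * ρ).trace).re)
    (σ : Matrix (Fin d) (Fin d) ℂ) (hσ : σ.PosSemidef)
    (hσeq : σ = ((Λ * ρ).trace)⁻¹ • (hΛ.sqrt * ρ * hΛ.sqrt)) :
    Real.sqrt (((Λ * ρ).trace).re) ≤ fidelity hρ hσ := by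
  set c := (Λ * ρ).trace with hc
  set r := c.re with hr
  have hrpos : 0 < r := hpos
  -- c is a nonnegative real
  have hcps : 0 ≤ c := by
    have h1 : c = (hΛ.sqrt * ρ * hΛ.sqrt).trace := by
      rw [hc, trace_mul_cycle, hΛ.sqrt_mul_self]
    rw [h1]
    exact aux_trace_nonneg (by
      have h := hρ.mul_mul_conjTranspose_same hΛ.sqrt
      rwa [hΛ.posSemidef_sqrt.1.eq] at h)
  have hcre : c = (r : ℂ) := by
    rw [Complex.le_def] at hcps
    apply Complex.ext
    · simp [hr]
    · simpa using hcps.2.symm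
  -- the matrix A = √ρ √Λ √ρ
  set A : Matrix (Fin d) (Fin d) ℂ := hρ.sqrt * hΛ.sqrt * hρ.sqrt with hAdef
  have hA : A.PosSemidef := by
    have h := hΛ.posSemidef_sqrt.mul_mul_conjTranspose_same hρ.sqrt
    rwa [hρ.posSemidef_sqrt.1.eq] at h
  set s : ℝ := (Real.sqrt r)⁻¹ with hs
  have hs0 : 0 ≤ s := inv_nonneg.mpr (Real.sqrt_nonneg r)
  have hsA : ((s : ℂ) • A).PosSemidef := aux_smul_psd hA hs0
  -- ((s : ℂ) • A)^2 = √ρ σ √ρ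
  have hsq : ((s : ℂ) • A) ^ 2 = hρ.sqrt * σ * hρ.sqrt := by
    have hs2 : ((s : ℂ)) ^ 2 = c⁻¹ := by
      rw [hcre, hs]
      norm_cast
      rw [inv_pow, Real.sq_sqrt hrpos.le]
    have hAA : A * A = hρ.sqrt * (hΛ.sqrt * ρ * hΛ.sqrt) * hρ.sqrt := by
      rw [hAdef]
      have hB := hρ.sqrt_mul_self
      generalize hρ.sqrt = B at hB ⊢
      rw [← hB]
      noncomm_ring
    rw [hσeq, Matrix.mul_smul, Matrix.smul_mul, smul_pow, hs2, pow_two, hAA]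
  -- compute fidelity
  have hfid : fidelity hρ hσ = (((s : ℂ) • A).trace).re := by
    unfold fidelity
    congr 2
    exact (hsA.eq_sqrt_of_sq_eq _ hsq).symm
  have htrA : A.trace = (hΛ.sqrt * ρ).trace := by
    rw [hAdef, trace_mul_cycle, hρ.sqrt_mul_self, trace_mul_comm]
  have hge : r ≤ ((hΛ.sqrt * ρ).trace).re := by
    have h := aux_trace_mul_nonneg (aux_sqrt_sub_psd hΛ hΛI) hρ
    rw [sub_mul, trace_sub, Complex.le_def] at h
    have := h.1
    simp only [Complex.zero_re, Complex.sub_re] at this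
    linarith
  rw [hfid, trace_smul, smul_eq_mul, Complex.re_ofReal_mul, htrA]
  calc Real.sqrt r = s * r := by
        rw [hs, inv_mul_eq_div, Real.div_sqrt]
    _ ≤ s * ((hΛ.sqrt * ρ).trace).re := by
        exact mul_le_mul_of_nonneg_left hge hs0
end

section
/- Let Λ_1, …, Λ_n be orthogonal projections on ℂ^d, let Λ := (1/n) Σ_{j=1}^n Λ_j, let ρ and σ be density matrices on ℂ^d, and let 0 < ε < 1. Suppose there exists an index i with tr(Λ_i ρ) ≥ 1−ε, and that tr(Λ σ) ≤ (1−ε)/(2n). Then the trace distance satisfies ‖ρ − σ‖_tr ≥ (1−ε)/2. -/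
open Matrix
open scoped ComplexOrder BigOperators

set_option maxHeartbeats 1000000

lemma diag_re_nonneg {d : ℕ} {M : Matrix (Fin d) (Fin d) ℂ} (h : M.PosSemidef) (k : Fin d) :
    0 ≤ (M k k).re := by
  exact (Complex.nonneg_iff.1 h.diag_nonneg).1

lemma trace_re_nonneg {d : ℕ} {M : Matrix (Fin d) (Fin d) ℂ} (h : M.PosSemidef) :
    0 ≤ (M.trace).re := by
  rw [Matrix.trace, Complex.re_sum]
  exact Finset.sum_nonneg fun k _ => diag_re_nonneg h k

lemma projection_posSemidef {d : ℕ} {P : Matrix (Fin d) (Fin d) ℂ}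
    (hP : P.IsHermitian) (hP2 : P * P = P) : P.PosSemidef := by
  have h : P = Pᴴ * P := by rw [hP.eq]; exact hP2.symm
  rw [h]
  exact posSemidef_conjTranspose_mul_self P

open scoped MatrixOrder in
lemma sqrt_form_eq {d : ℕ} {B S : Matrix (Fin d) (Fin d) ℂ} (hB : B.PosSemidef)
    (hS : S.PosSemidef) (hSS : S * S = B) :
    S = hB.1.eigenvectorUnitary.1 * diagonal (((↑) : ℝ → ℂ) ∘ (√·) ∘ hB.1.eigenvalues) *
      (star hB.1.eigenvectorUnitary : Matrix (Fin d) (Fin d) ℂ) := by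
  have h1 : CFC.sqrt B = S := CFC.sqrt_unique hSS hS.nonneg
  rw [← h1, CFC.sqrt_eq_cfc, cfc_nnreal_eq_real _ B hB.nonneg, hB.1.cfc_eq, IsHermitian.cfc,
    Unitary.conjStarAlgAut_apply]
  congr 2
  funext k l
  simp [diagonal_apply, Real.coe_sqrt, hB.eigenvalues_nonneg k]

lemma key {d : ℕ} {A P : Matrix (Fin d) (Fin d) ℂ} (hA : A.IsHermitian)
    (htr : A.trace = 0) (hP : P.IsHermitian) (hP2 : P * P = P) :
    ((P * A).trace).re ≤ (1/2) * (((Matrix.posSemidef_conjTranspose_mul_self A).1.eigenvectorUnitary.1 *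
    diagonal (((↑) : ℝ → ℂ) ∘ (√·) ∘ (Matrix.posSemidef_conjTranspose_mul_self A).1.eigenvalues) *
    (star (Matrix.posSemidef_conjTranspose_mul_self A).1.eigenvectorUnitary : Matrix (Fin d) (Fin d) ℂ)).trace).re := by
  set U : Matrix (Fin d) (Fin d) ℂ := (hA.eigenvectorUnitary : Matrix (Fin d) (Fin d) ℂ) with hUdef
  have hU1 : star U * U = 1 := Unitary.coe_star_mul_self hA.eigenvectorUnitary
  have hU2 : U * star U = 1 := Unitary.coe_mul_star_self hA.eigenvectorUnitary
  set lam := hA.eigenvalues with hlam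
  set D : Matrix (Fin d) (Fin d) ℂ := diagonal (RCLike.ofReal ∘ lam) with hD
  have hspec : A = U * D * star U := hA.spectral_theorem
  set S : Matrix (Fin d) (Fin d) ℂ := U * diagonal (fun k => ((|lam k| : ℝ) : ℂ)) * star U with hSdef
  have hSpsd : S.PosSemidef := by
    have h1 : (diagonal (fun k => ((|lam k| : ℝ) : ℂ))).PosSemidef := by
      refine Matrix.PosSemidef.diagonal fun k => ?_
      exact Complex.zero_le_real.2 (abs_nonneg (lam k))
    simpa [star_eq_conjTranspose, hSdef] using h1.mul_mul_conjTranspose_same U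
  have hconj : ∀ X Y : Matrix (Fin d) (Fin d) ℂ,
      (U * X * star U) * (U * Y * star U) = U * (X * Y) * star U := by
    intro X Y
    simp only [mul_assoc]
    rw [← mul_assoc (star U) U (Y * star U), hU1, one_mul]
  have hSsq : S ^ 2 = Aᴴ * A := by
    rw [hA.eq]
    rw [hspec, pow_two, hSdef, hconj, hconj]
    congr 2
    rw [diagonal_mul_diagonal, hD, diagonal_mul_diagonal]
    congr 1
    funext k
    simp [← Complex.ofReal_mul, abs_mul_abs_self]
  have hSqrt : S = ((Matrix.posSemidef_conjTranspose_mul_self A).1.eigenvectorUnitary.1 *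
    diagonal (((↑) : ℝ → ℂ) ∘ (√·) ∘ (Matrix.posSemidef_conjTranspose_mul_self A).1.eigenvalues) *
    (star (Matrix.posSemidef_conjTranspose_mul_self A).1.eigenvectorUnitary : Matrix (Fin d) (Fin d) ℂ)) :=
    sqrt_form_eq (Matrix.posSemidef_conjTranspose_mul_self A) hSpsd (by rw [← pow_two]; exact hSsq)
  have htrS : (((Matrix.posSemidef_conjTranspose_mul_self A).1.eigenvectorUnitary.1 *
    diagonal (((↑) : ℝ → ℂ) ∘ (√·) ∘ (Matrix.posSemidef_conjTranspose_mul_self A).1.eigenvalues) *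
    (star (Matrix.posSemidef_conjTranspose_mul_self A).1.eigenvectorUnitary : Matrix (Fin d) (Fin d) ℂ)).trace).re = ∑ k, |lam k| := by
    rw [← hSqrt, hSdef, Matrix.trace_mul_cycle, hU1, one_mul, trace_diagonal]
    simp [Complex.re_sum]
  have hsum0 : ∑ k, lam k = 0 := by
    have h1 : A.trace = ∑ k, (lam k : ℂ) := by
      rw [hspec, Matrix.trace_mul_cycle, hU1, one_mul, trace_diagonal]
      rfl
    rw [htr] at h1
    have := congrArg Complex.re h1.symm
    simpa [Complex.re_sum] using this
  set M : Matrix (Fin d) (Fin d) ℂ := star U * P * U with hM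
  have hMpsd : M.PosSemidef := by
    have := (projection_posSemidef hP hP2).mul_mul_conjTranspose_same (star U)
    simpa [star_eq_conjTranspose, hM] using this
  have hNpsd : ((1 : Matrix (Fin d) (Fin d) ℂ) - M).PosSemidef := by
    have h1H : ((1 : Matrix (Fin d) (Fin d) ℂ) - P).IsHermitian := Matrix.isHermitian_one.sub hP
    have h12 : ((1 : Matrix (Fin d) (Fin d) ℂ) - P) * (1 - P) = 1 - P := by
      rw [mul_sub, sub_mul, sub_mul, hP2]; simp
    have := (projection_posSemidef h1H h12).mul_mul_conjTranspose_same (star U)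
    have h2 : star U * (1 - P) * (star U)ᴴ = 1 - M := by
      rw [star_eq_conjTranspose, conjTranspose_conjTranspose, mul_sub, sub_mul, mul_one,
        ← star_eq_conjTranspose, hU1, hM]
    rwa [h2] at this
  have hq0 : ∀ k, 0 ≤ (M k k).re := fun k => diag_re_nonneg hMpsd k
  have hq1 : ∀ k, (M k k).re ≤ 1 := by
    intro k
    have h3 := diag_re_nonneg hNpsd k
    simp [Matrix.sub_apply, Matrix.one_apply] at h3
    linarith
  have htrPA : ((P * A).trace).re = ∑ k, lam k * (M k k).re := by
    have hrw : (P * A).trace = (M * D).trace := by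
      rw [hspec]
      have h1 : P * (U * D * star U) = (P * U) * D * star U := by simp only [mul_assoc]
      rw [h1, Matrix.trace_mul_cycle]
      congr 1
      rw [hM]; simp only [mul_assoc]
    rw [hrw]
    have h2 : (M * D).trace = ∑ k, M k k * (lam k : ℂ) := by
      simp [Matrix.trace, Matrix.mul_apply, hD, diagonal_apply, Matrix.diag]
    rw [h2, Complex.re_sum]
    congr 1
    funext k
    simp [Complex.mul_re, mul_comm]
  rw [htrPA, htrS]
  have hle : ∑ k, lam k * (M k k).re ≤ ∑ k, (|lam k| + lam k) / 2 := by
    refine Finset.sum_le_sum fun k _ => ?_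
    rcases le_or_gt 0 (lam k) with h | h
    · have := mul_le_mul_of_nonneg_left (hq1 k) h
      rw [abs_of_nonneg h]; linarith
    · have := mul_nonpos_of_nonpos_of_nonneg h.le (hq0 k)
      rw [abs_of_neg h]; linarith
  calc ∑ k, lam k * (M k k).re ≤ ∑ k, (|lam k| + lam k) / 2 := hle
    _ = 1/2 * ∑ k, |lam k| := by
        rw [← Finset.sum_div, Finset.sum_add_distrib, hsum0, add_zero]; ring

/-- The trace distance `‖ρ − σ‖_tr = (1/2)·tr|ρ − σ|`, where `|M| = √(Mᴴ M)`. -/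
noncomputable def traceDist {d : ℕ} (ρ σ : Matrix (Fin d) (Fin d) ℂ) : ℝ :=
  (1 / 2) * (((Matrix.posSemidef_conjTranspose_mul_self (ρ - σ)).1.eigenvectorUnitary.1 *
    diagonal (((↑) : ℝ → ℂ) ∘ (√·) ∘ (Matrix.posSemidef_conjTranspose_mul_self (ρ - σ)).1.eigenvalues) *
    (star (Matrix.posSemidef_conjTranspose_mul_self (ρ - σ)).1.eigenvectorUnitary : Matrix (Fin d) (Fin d) ℂ)).trace).re

/-- If some projector `Λ_i` accepts `ρ` with probability at least `1−ε`
while the average `Λ = (1/n)·Σ_j Λ_j` accepts `σ` with probability at most `(1−ε)/(2n)`,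
then `‖ρ − σ‖_tr ≥ (1−ε)/2`. -/
theorem stmt_4 {d n : ℕ} (Λ : Fin n → Matrix (Fin d) (Fin d) ℂ)
    (hΛH : ∀ j, (Λ j).IsHermitian) (hΛ2 : ∀ j, Λ j * Λ j = Λ j)
    (ρ σ : Matrix (Fin d) (Fin d) ℂ)
    (hρ : ρ.PosSemidef) (hρtr : ρ.trace = 1)
    (hσ : σ.PosSemidef) (hσtr : σ.trace = 1)
    (ε : ℝ) (hε0 : 0 < ε) (hε1 : ε < 1)
    (i : Fin n) (hi : 1 - ε ≤ ((Λ i * ρ).trace).re)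
    (havg : (((((n : ℂ))⁻¹ • ∑ j, Λ j) * σ).trace).re ≤ (1 - ε) / (2 * n)) :
    (1 - ε) / 2 ≤ traceDist ρ σ := by
  have hn : 0 < (n : ℝ) := by
    have := i.pos
    exact_mod_cast this
  -- nonnegativity of each tr(Λ j σ)
  have hjnn : ∀ j, 0 ≤ ((Λ j * σ).trace).re := by
    intro j
    have hpsd : (Λ j * σ * Λ j).PosSemidef := by
      have := hσ.mul_mul_conjTranspose_same (Λ j)
      rwa [(hΛH j).eq] at this
    have h1 : (Λ j * σ * Λ j).trace = (Λ j * σ).trace := by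
      rw [Matrix.trace_mul_cycle, hΛ2 j]
    have := trace_re_nonneg hpsd
    rwa [h1] at this
  -- rewrite havg
  have havg' : (n : ℝ)⁻¹ * ∑ j, ((Λ j * σ).trace).re ≤ (1 - ε) / (2 * n) := by
    have h1 : ((((n : ℂ))⁻¹ • ∑ j, Λ j) * σ).trace = (n : ℂ)⁻¹ * ∑ j, (Λ j * σ).trace := by
      rw [smul_mul_assoc, Matrix.trace_smul, Finset.sum_mul, Matrix.trace_sum, smul_eq_mul]
    rw [h1] at havg
    have h2 : ((n : ℂ)⁻¹ * ∑ j, (Λ j * σ).trace).re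
        = (n : ℝ)⁻¹ * ∑ j, ((Λ j * σ).trace).re := by
      have : ((n : ℂ))⁻¹ = (((n : ℝ)⁻¹ : ℝ) : ℂ) := by push_cast; ring
      rw [this, Complex.re_ofReal_mul, Complex.re_sum]
    rwa [h2] at havg
  have hσi : ((Λ i * σ).trace).re ≤ (1 - ε) / 2 := by
    have hle : ((Λ i * σ).trace).re ≤ ∑ j, ((Λ j * σ).trace).re :=
      Finset.single_le_sum (fun j _ => hjnn j) (Finset.mem_univ i)
    have := mul_le_mul_of_nonneg_left havg' hn.le
    rw [← mul_assoc, mul_inv_cancel₀ hn.ne', one_mul] at this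
    have hx : (n : ℝ) * ((1 - ε) / (2 * n)) = (1 - ε) / 2 := by
      field_simp
    rw [hx] at this
    linarith
  -- apply key lemma
  have hAH : (ρ - σ).IsHermitian := hρ.1.sub hσ.1
  have hAtr : (ρ - σ).trace = 0 := by rw [Matrix.trace_sub, hρtr, hσtr, sub_self]
  have hk := key hAH hAtr (hΛH i) (hΛ2 i)
  have hsplit : ((Λ i * (ρ - σ)).trace).re = ((Λ i * ρ).trace).re - ((Λ i * σ).trace).re := by
    rw [mul_sub, Matrix.trace_sub, Complex.sub_re]
  rw [hsplit] at hk
  unfold traceDist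
  linarith
end
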